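/- Let k ≥ 1 and let λ be an infinite cardinal. Then: (a) there exists a simple graph H, elementarily equivalent (in the language of graphs) to the shift graph Sh_k(ℕ), with vertex set of cardinality ℶ_{k−1}(λ)⁺ and with no proper coloring with colors in a set of cardinality at most λ; and (b) every simple graph H elementarily equivalent to Sh_k(ℕ) with vertex set of cardinality at most ℶ_{k−1}(λ) admits a proper coloring with colors in a set of cardinality at most λ. -/

import Mathlib

open Cardinal

/-- `t` is the shift of `s`: `s_i = t_{i-1}` for all `1 ≤ i ≤ r-1`. -/
def IsShiftOf {A : Type} {r : ℕ} (s t : Fin r → A) : Prop :=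
  ∀ (i : ℕ) (h : i + 1 < r), s ⟨i + 1, h⟩ = t ⟨i, Nat.lt_of_succ_lt h⟩

/-- The shift graph `Sh_r(A)` on a linear order `A`: vertices are strictly increasing
`r`-tuples from `A`, and distinct vertices `s, t` are adjacent iff one is the shift
of the other. -/
def ShiftGraph (A : Type) [LinearOrder A] (r : ℕ) :
    SimpleGraph {s : Fin r → A // StrictMono s} where
  Adj s t := s ≠ t ∧ (IsShiftOf s.1 t.1 ∨ IsShiftOf t.1 s.1)
  symm := by
    constructor
    rintro s t ⟨hne, h⟩
    exact ⟨hne.symm, h.symm⟩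
  loopless := by
    constructor
    rintro s ⟨hne, -⟩
    exact hne rfl

/-- The symmetric shift graph `Sh_r^sym(A)` on a set `A`: vertices are `r`-tuples of
pairwise distinct elements of `A`, and distinct vertices `s, t` are adjacent iff one
is the shift of the other. -/
def SymShiftGraph (A : Type) (r : ℕ) :
    SimpleGraph {s : Fin r → A // Function.Injective s} where
  Adj s t := s ≠ t ∧ (IsShiftOf s.1 t.1 ∨ IsShiftOf t.1 s.1)
  symm := by
    constructor
    rintro s t ⟨hne, h⟩
    exact ⟨hne.symm, h.symm⟩
  loopless := by
    constructor
    rintro s ⟨hne, -⟩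
    exact hne rfl

open FirstOrder FirstOrder.Language

/-- Iterated beth: `iterBeth μ 0 = μ` and `iterBeth μ (k+1) = 2 ^ iterBeth μ k`. -/
def iterBeth (μ : Cardinal) : ℕ → Cardinal
  | 0 => μ
  | k + 1 => 2 ^ iterBeth μ k


set_option linter.unusedSectionVars false
set_option linter.unusedVariables false
set_option maxHeartbeats 1000000

namespace Stmt17


lemma le_iterBeth (μ : Cardinal) (n : ℕ) : μ ≤ iterBeth μ n := by
  induction n with
  | zero => exact le_rfl
  | succ n ih => exact ih.trans (le_of_lt (Cardinal.cantor _))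

lemma aleph0_le_iterBeth {μ : Cardinal} (h : ℵ₀ ≤ μ) (n : ℕ) : ℵ₀ ≤ iterBeth μ n :=
  h.trans (le_iterBeth μ n)

lemma iterBeth_mono {μ ν : Cardinal} (h : μ ≤ ν) (n : ℕ) : iterBeth μ n ≤ iterBeth ν n := by
  induction n with
  | zero => exact h
  | succ n ih => exact Cardinal.power_le_power_left two_ne_zero ih

lemma iterBeth_base_pow (μ : Cardinal) (n : ℕ) : iterBeth (2 ^ μ) n = iterBeth μ (n + 1) := by
  induction n with
  | zero => rfl
  | succ n ih => show 2 ^ iterBeth (2 ^ μ) n = _; rw [ih]; rfl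

section dd

variable {Y : Type} [LinearOrder Y] [WellFoundedLT Y] [Nonempty Y]

def dset (A B : Set Y) : Set Y := {y : Y | ¬ (y ∈ A ↔ y ∈ B)}

lemma dset_nonempty {A B : Set Y} (h : A ≠ B) : (dset A B).Nonempty := by
  by_contra h'
  rw [Set.not_nonempty_iff_eq_empty, Set.eq_empty_iff_forall_notMem] at h'
  apply h
  ext y
  have := h' y
  simp only [dset, Set.mem_setOf_eq, not_not] at this
  exact this

open Classical in
noncomputable def dd (A B : Set Y) : Y :=
  if h : (dset A B).Nonempty then wellFounded_lt.min _ h else Classical.arbitrary Y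

open Classical in
lemma dd_mem {A B : Set Y} (h : A ≠ B) : ¬ (dd A B ∈ A ↔ dd A B ∈ B) := by
  have hne := dset_nonempty h
  rw [dd, dif_pos hne]
  exact wellFounded_lt.min_mem _ hne

open Classical in
lemma dd_min {A B : Set Y} {y : Y} (h : A ≠ B) (hy : y < dd A B) : y ∈ A ↔ y ∈ B := by
  have hne := dset_nonempty h
  rw [dd, dif_pos hne] at hy
  by_contra hc
  exact wellFounded_lt.not_lt_min (dset A B) hc hy

end dd

/-- The main combinatorial upper bound: the symmetric shift graph on `k`-tuples from a set of
cardinality at most `ℶ_{k-1}(λ)` has a proper coloring with at most `λ` colors. -/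
lemma symColor (lam : Cardinal.{0}) (hlam : ℵ₀ ≤ lam) (k : ℕ) (hk : 1 ≤ k) :
    ∀ (X : Type), #X ≤ iterBeth lam (k - 1) →
      ∃ (C : Type) (c : {s : Fin k → X // Function.Injective s} → C),
        #C ≤ lam ∧ ∀ x y, (SymShiftGraph X k).Adj x y → c x ≠ c y := by
  induction k, hk using Nat.le_induction with
  | base =>
    intro X hX
    refine ⟨X, fun s => s.1 0, hX, ?_⟩
    rintro x y ⟨hne, -⟩ hc
    apply hne
    apply Subtype.ext
    funext i
    have hi : i = 0 := Subsingleton.elim _ _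
    rw [hi]
    exact hc
  | succ k hk ih =>
    intro X hX
    classical
    obtain ⟨k', rfl⟩ : ∃ k', k = k' + 1 := ⟨k - 1, by omega⟩
    set k := k' + 1 with hkdef
    set μ := iterBeth lam (k - 1) with hμ
    have hXμ : #X ≤ 2 ^ μ := by
      have : iterBeth lam (k + 1 - 1) = 2 ^ iterBeth lam (k - 1) := by
        rw [hkdef]
        simp only [Nat.add_sub_cancel]
        rfl
      rwa [this] at hX
    have hμinf : ℵ₀ ≤ μ := aleph0_le_iterBeth hlam _
    set Y := μ.ord.ToType with hY
    have hYcard : #Y = μ := by rw [hY, Cardinal.mk_toType, Cardinal.card_ord]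
    have hYne : Nonempty Y := by
      rw [← Cardinal.mk_ne_zero_iff, hYcard]
      exact ne_of_gt (lt_of_lt_of_le Cardinal.aleph0_pos hμinf)
    obtain ⟨ι⟩ : Nonempty (X ↪ Set Y) := by
      rw [← Cardinal.le_def, Cardinal.mk_set, hYcard]
      exact hXμ
    obtain ⟨C', c', hC'le, hprop'⟩ := ih Y (le_of_eq hYcard)
    -- the tuple of sets, with junk values
    set SS : (Fin (k + 1) → X) → ℕ → Set Y :=
      fun f i => if h : i < k + 1 then (ι (f ⟨i, h⟩) : Set Y) else ∅ with hSSdef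
    set DD : (Fin (k + 1) → X) → ℕ → Y := fun f j => dd (SS f j) (SS f (j + 1)) with hDDdef
    set ccol : {s : Fin (k + 1) → X // Function.Injective s} →
        ((Fin k → Fin k → Prop) × (Fin (k + 1) → Fin k → Prop) × Option C') :=
      fun s => (fun a b => DD s.1 a = DD s.1 b,
                fun i j => DD s.1 j ∈ SS s.1 i,
                if h : Function.Injective (fun j : Fin k => DD s.1 j) then some (c' ⟨_, h⟩)
                else none) with hccol
    refine ⟨_, ccol, ?_, ?_⟩
    · -- cardinality bound
      have h1 : #(Fin k → Fin k → Prop) ≤ lam :=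
        le_trans (le_of_lt (Cardinal.lt_aleph0_of_finite _)) hlam
      have h2 : #(Fin (k + 1) → Fin k → Prop) ≤ lam :=
        le_trans (le_of_lt (Cardinal.lt_aleph0_of_finite _)) hlam
      have h3 : #(Option C') ≤ lam := by
        rw [Cardinal.mk_option]
        calc #C' + 1 ≤ lam + lam :=
              add_le_add hC'le (le_trans Cardinal.one_le_aleph0 hlam)
          _ = lam := Cardinal.add_eq_self hlam
      calc #((Fin k → Fin k → Prop) × (Fin (k + 1) → Fin k → Prop) × Option C')
          = #(Fin k → Fin k → Prop) * (#(Fin (k + 1) → Fin k → Prop) * #(Option C')) := by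
            simp [Cardinal.mk_prod]
        _ ≤ lam * (lam * lam) := by
            exact mul_le_mul' h1 (mul_le_mul' h2 h3)
        _ = lam := by rw [Cardinal.mul_eq_self hlam, Cardinal.mul_eq_self hlam]
    · -- properness
      have key : ∀ x y : {s : Fin (k + 1) → X // Function.Injective s},
          IsShiftOf x.1 y.1 → ccol x = ccol y → False := by
        intro x y hsh hcc
        rw [hccol] at hcc
        simp only [Prod.mk.injEq] at hcc
        obtain ⟨hP, hM, hO⟩ := hcc
        -- basic facts
        have fact0 : ∀ i : ℕ, i < k → SS y.1 i = SS x.1 (i + 1) := by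
          intro i hi
          rw [hSSdef]
          simp only
          rw [dif_pos (by omega : i < k + 1), dif_pos (by omega : i + 1 < k + 1)]
          have := hsh i (by omega)
          rw [← this]
        have fact1 : ∀ j : ℕ, j + 1 < k → DD y.1 j = DD x.1 (j + 1) := by
          intro j hj
          rw [hDDdef]
          simp only
          rw [fact0 j (by omega), fact0 (j + 1) (by omega)]
        have factD : ∀ i : ℕ, i + 1 < k + 1 → SS x.1 i ≠ SS x.1 (i + 1) := by
          intro i hi
          rw [hSSdef]
          simp only
          rw [dif_pos (by omega : i < k + 1), dif_pos hi]
          intro hEq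
          have := x.2 (ι.injective hEq)
          simp only [Fin.mk.injEq] at this
          omega
        have factDD : ∀ i : ℕ, i + 1 < k + 1 →
            ¬ (DD x.1 i ∈ SS x.1 i ↔ DD x.1 i ∈ SS x.1 (i + 1)) := by
          intro i hi
          exact dd_mem (factD i hi)
        have factMin : ∀ (i : ℕ) (z : Y), i + 1 < k + 1 → z < DD x.1 i →
            (z ∈ SS x.1 i ↔ z ∈ SS x.1 (i + 1)) := by
          intro i z hi hz
          exact dd_min (factD i hi) hz
        have hP' : ∀ a b : ℕ, a < k → b < k →
            ((DD x.1 a = DD x.1 b) ↔ (DD y.1 a = DD y.1 b)) := by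
          intro a b ha hb
          exact iff_of_eq (congrFun (congrFun hP ⟨a, ha⟩) ⟨b, hb⟩)
        have hM' : ∀ i j : ℕ, i < k + 1 → j < k →
            ((DD x.1 j ∈ SS x.1 i) ↔ (DD y.1 j ∈ SS y.1 i)) := by
          intro i j hi hj
          exact iff_of_eq (congrFun (congrFun hM ⟨i, hi⟩) ⟨j, hj⟩)
        have diag : ∀ i j : ℕ, i < k → j + 1 < k →
            ((DD x.1 j ∈ SS x.1 i) ↔ (DD x.1 (j + 1) ∈ SS x.1 (i + 1))) := by
          intro i j hi hj
          rw [hM' i j (by omega) (by omega), fact1 j hj, fact0 i hi]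
        have diagN : ∀ (n i j : ℕ), i + n < k + 1 → j + n < k →
            ((DD x.1 j ∈ SS x.1 i) ↔ (DD x.1 (j + n) ∈ SS x.1 (i + n))) := by
          intro n
          induction n with
          | zero => intro i j _ _; rfl
          | succ n ihn =>
            intro i j hi hj
            rw [ihn i j (by omega) (by omega), diag (i + n) (j + n) (by omega) (by omega)]
            exact Iff.rfl
        have pinv : ∀ a b : ℕ, a + 1 < k → b + 1 < k →
            ((DD x.1 a = DD x.1 b) ↔ (DD x.1 (a + 1) = DD x.1 (b + 1))) := by
          intro a b ha hb
          rw [hP' a b (by omega) (by omega), fact1 a ha, fact1 b hb]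
        by_cases hInj : Function.Injective (fun j : Fin k => DD x.1 j)
        · -- the difference tuple is injective
          have hgInj : Function.Injective (fun j : Fin k => DD y.1 j) := by
            intro a b hab
            apply hInj
            show DD x.1 (a : ℕ) = DD x.1 (b : ℕ)
            exact (hP' a b a.isLt b.isLt).2 hab
          rw [dif_pos hInj, dif_pos hgInj, Option.some.injEq] at hO
          by_cases heq : (fun j : Fin k => DD x.1 j) = (fun j : Fin k => DD y.1 j)
          · have h00 : DD x.1 (0 : ℕ) = DD y.1 (0 : ℕ) := by
              have := congrFun heq ⟨0, by omega⟩
              exact this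
            have h1 := hM' 0 0 (by omega) (by omega)
            rw [← h00, fact0 0 (by omega)] at h1
            exact factDD 0 (by omega) h1
          · have hAdj : (SymShiftGraph Y k).Adj ⟨_, hInj⟩ ⟨_, hgInj⟩ := by
              refine ⟨?_, Or.inl ?_⟩
              · intro hEq
                exact heq (congrArg Subtype.val hEq)
              · intro i hi
                show DD x.1 ((⟨i + 1, hi⟩ : Fin k) : ℕ) = DD y.1 ((⟨i, _⟩ : Fin k) : ℕ)
                exact (fact1 i hi).symm
            exact hprop' _ _ hAdj hO
        · -- the difference tuple is not injective
          rw [Function.not_injective_iff] at hInj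
          obtain ⟨a, b, hab, habne⟩ := hInj
          have down : ∀ (m u v : ℕ), u < v → v < k → DD x.1 u = DD x.1 v → m ≤ u →
              DD x.1 (u - m) = DD x.1 (v - m) := by
            intro m
            induction m with
            | zero => intro u v _ _ h _; simpa using h
            | succ m ihm =>
              intro u v huv hv h hm
              have prev := ihm u v huv hv h (by omega)
              have e1 : u - m = (u - (m + 1)) + 1 := by omega
              have e2 : v - m = (v - (m + 1)) + 1 := by omega
              rw [e1, e2] at prev
              exact (pinv (u - (m + 1)) (v - (m + 1)) (by omega) (by omega)).2 prev
          have H0 : ∃ e, 1 ≤ e ∧ e < k ∧ DD x.1 0 = DD x.1 e := by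
            rcases lt_or_gt_of_ne (fun h : a = b => habne h) with hlt | hlt
            · have := down a (a : ℕ) (b : ℕ) hlt b.isLt hab (le_refl _)
              simp only [Nat.sub_self] at this
              exact ⟨(b : ℕ) - a, by omega, by omega, this⟩
            · have := down b (b : ℕ) (a : ℕ) hlt a.isLt hab.symm (le_refl _)
              simp only [Nat.sub_self] at this
              exact ⟨(a : ℕ) - b, by omega, by omega, this⟩
          set d := Nat.find H0 with hd
          obtain ⟨hd1, hdk, hd0⟩ := Nat.find_spec H0
          have dmin : ∀ e, 1 ≤ e → e < k → DD x.1 0 = DD x.1 e → d ≤ e := by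
            intro e h1 h2 h3
            exact Nat.find_min' H0 ⟨h1, h2, h3⟩
          have per : ∀ i, i + d < k → DD x.1 i = DD x.1 (i + d) := by
            intro i
            induction i with
            | zero => intro _; simpa using hd0
            | succ i ihi =>
              intro hi
              have := (pinv i (i + d) (by omega) (by omega)).1 (ihi (by omega))
              convert this using 2
              omega
          have wdist : ∀ u v : ℕ, u < v → v < k → v - u < d → DD x.1 u ≠ DD x.1 v := by
            intro u v huv hv hvu hcontra
            have := down u u v huv hv hcontra (le_refl _)
            simp only [Nat.sub_self] at this
            have := dmin (v - u) (by omega) (by omega) this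
            omega
          obtain ⟨r₀, hr₀mem, hr₀min⟩ :=
            Finset.exists_min_image (Finset.range d) (fun j => DD x.1 j)
              ⟨0, Finset.mem_range.2 (by omega)⟩
          rw [Finset.mem_range] at hr₀mem
          have strict : ∀ j, j < d → j ≠ r₀ → DD x.1 r₀ < DD x.1 j := by
            intro j hj hjr
            refine lt_of_le_of_ne (hr₀min j (Finset.mem_range.2 hj)) ?_
            intro hEq
            rcases lt_or_gt_of_ne hjr with h | h
            · exact wdist j r₀ h (by omega) (by omega) hEq.symm
            · exact wdist r₀ j h (by omega) (by omega) hEq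
          -- alternation: membership of DD x.1 r₀ flips exactly once between Sf 0 and Sf d
          have step_eq : ∀ j, j < d → j ≠ r₀ →
              ((DD x.1 r₀ ∈ SS x.1 j) ↔ (DD x.1 r₀ ∈ SS x.1 (j + 1))) := by
            intro j hj hjr
            exact factMin j _ (by omega) (strict j hj hjr)
          have claimA : ∀ j, j ≤ r₀ → ((DD x.1 r₀ ∈ SS x.1 0) ↔ (DD x.1 r₀ ∈ SS x.1 j)) := by
            intro j
            induction j with
            | zero => intro _; rfl
            | succ j ihj =>
              intro hj
              rw [ihj (by omega)]
              exact step_eq j (by omega) (by omega)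
          have claimB : ∀ j, r₀ + 1 ≤ j → j ≤ d →
              ((DD x.1 r₀ ∈ SS x.1 (r₀ + 1)) ↔ (DD x.1 r₀ ∈ SS x.1 j)) := by
            intro j
            induction j with
            | zero => intro h _; omega
            | succ j ihj =>
              intro hj hjd
              rcases Nat.eq_or_lt_of_le hj with h | h
              · rw [h]
              · rw [ihj (by omega) (by omega)]
                exact step_eq j (by omega) (by omega)
          have alt : ¬ ((DD x.1 r₀ ∈ SS x.1 0) ↔ (DD x.1 r₀ ∈ SS x.1 d)) := by
            intro hc
            apply factDD r₀ (by omega)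
            constructor
            · intro h
              exact ((claimB d (by omega) (le_refl _)).2 (hc.1 ((claimA r₀ (le_refl _)).2 h)))
            · intro h
              exact (claimA r₀ (le_refl _)).1 (hc.2 ((claimB d (by omega) (le_refl _)).1 h))
          -- the path argument
          set t := r₀ + d + 1 - k with ht
          have ht_r₀ : t ≤ r₀ := by omega
          have ht_d : t ≤ d := by omega
          have hcol : r₀ - t + d < k := by omega
          have e1 : (DD x.1 (r₀ - t) ∈ SS x.1 (d - t)) ↔ (DD x.1 r₀ ∈ SS x.1 d) := by
            have := diagN t (d - t) (r₀ - t) (by omega) (by omega)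
            rw [Nat.sub_add_cancel ht_r₀, Nat.sub_add_cancel ht_d] at this
            exact this
          have e2 : DD x.1 (r₀ - t) = DD x.1 (r₀ - t + d) := per (r₀ - t) (by omega)
          have e3 : (DD x.1 r₀ ∈ SS x.1 0) ↔ (DD x.1 (r₀ - t + d) ∈ SS x.1 (d - t)) := by
            have := diagN (d - t) 0 r₀ (by omega) (by omega)
            rw [Nat.zero_add] at this
            have harith : r₀ + (d - t) = r₀ - t + d := by omega
            rw [harith] at this
            exact this
          apply alt
          rw [e3, ← e2, e1]
      rintro x y ⟨hne, hsh | hsh⟩ hc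
      · exact key x y hsh hc
      · exact key y x hsh hc.symm


section Lower

variable {A : Type} [LinearOrder A] [NoMaxOrder A]

/-- Extend a `k`-tuple by one extra element at the end. -/
def ext (k : ℕ) (f : Fin k → A) (β : A) : Fin (k + 1) → A :=
  fun i => if h : (i : ℕ) < k then f ⟨i, h⟩ else β

lemma ext_lt {k : ℕ} (f : Fin k → A) (β : A) {i : Fin (k + 1)} (h : (i : ℕ) < k) :
    ext k f β i = f ⟨i, h⟩ := dif_pos h

lemma ext_last {k : ℕ} (f : Fin k → A) (β : A) {i : Fin (k + 1)} (h : ¬ (i : ℕ) < k) :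
    ext k f β i = β := dif_neg h

lemma ext_mono {k : ℕ} (hk : 1 ≤ k) {f : Fin k → A} (hf : StrictMono f) {β : A}
    (hβ : f ⟨k - 1, by omega⟩ < β) : StrictMono (ext k f β) := by
  intro i j hij
  have hij' : (i : ℕ) < (j : ℕ) := hij
  by_cases hj : (j : ℕ) < k
  · have hi : (i : ℕ) < k := by omega
    rw [ext_lt f β hi, ext_lt f β hj]
    exact hf (by exact hij')
  · rw [ext_last f β hj]
    by_cases hi : (i : ℕ) < k
    · rw [ext_lt f β hi]
      refine lt_of_le_of_lt ?_ hβ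
      refine hf.monotone ?_
      show (i : ℕ) ≤ k - 1
      omega
    · exfalso
      have : (i : ℕ) < k + 1 := i.isLt
      have : (j : ℕ) < k + 1 := j.isLt
      omega

/-- The Erdős–Hajnal style lower bound: a proper coloring of the shift graph of a linear
order without maximum forces the order to be small. -/
lemma shiftLower (k : ℕ) (hk : 1 ≤ k) :
    ∀ (C : Type) (c : {s : Fin k → A // StrictMono s} → C),
      (∀ x y, (ShiftGraph A k).Adj x y → c x ≠ c y) → #A ≤ iterBeth #C (k - 1) := by
  induction k, hk using Nat.le_induction with
  | base =>
    intro C c hc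
    have vmono : ∀ a : A, StrictMono (fun _ : Fin 1 => a) := by
      intro a i j hij
      exact absurd (Subsingleton.elim i j) (ne_of_lt hij)
    refine Cardinal.mk_le_of_injective (f := fun a => c ⟨fun _ => a, vmono a⟩) ?_
    intro a b hab
    by_contra hne
    refine hc ⟨fun _ => a, vmono a⟩ ⟨fun _ => b, vmono b⟩ ⟨?_, Or.inl ?_⟩ hab
    · intro hEq
      exact hne (congrFun (congrArg Subtype.val hEq) 0)
    · intro i hi
      omega
  | succ k hk ih =>
    intro C c hc
    classical
    -- the set-of-colors coloring of the k-shift graph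
    set G : {s : Fin k → A // StrictMono s} → Set C :=
      fun u => {z | ∃ (β : A) (hβ : u.1 ⟨k - 1, by omega⟩ < β),
        z = c ⟨ext k u.1 β, ext_mono hk u.2 hβ⟩} with hG
    have keyL : ∀ u v : {s : Fin k → A // StrictMono s},
        (∀ (i : ℕ) (h : i + 1 < k), u.1 ⟨i + 1, h⟩ = v.1 ⟨i, by omega⟩) →
        u.1 ⟨k - 1, by omega⟩ < v.1 ⟨k - 1, by omega⟩ → G u ≠ G v := by
      intro u v hsh hlast hGuv
      set β₁ := v.1 ⟨k - 1, by omega⟩ with hβ₁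
      have hw : c ⟨ext k u.1 β₁, ext_mono hk u.2 hlast⟩ ∈ G u := ⟨β₁, hlast, rfl⟩
      rw [hGuv] at hw
      obtain ⟨β', hβ', he⟩ := hw
      -- the two (k+1)-tuples are adjacent
      have hu0v0 : u.1 ⟨0, by omega⟩ < v.1 ⟨0, by omega⟩ := by
        by_cases hk2 : k = 1
        · subst hk2
          exact hlast
        · have h1 : u.1 ⟨1, by omega⟩ = v.1 ⟨0, by omega⟩ := hsh 0 (by omega)
          rw [← h1]
          exact u.2 (show (⟨0, by omega⟩ : Fin k) < ⟨1, by omega⟩ by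
            rw [Fin.mk_lt_mk]; omega)
      refine hc ⟨ext k u.1 β₁, ext_mono hk u.2 hlast⟩ ⟨ext k v.1 β', ext_mono hk v.2 hβ'⟩
        ⟨?_, Or.inl ?_⟩ he
      · intro hEq
        have h0 : ext k u.1 β₁ ⟨0, by omega⟩ = ext k v.1 β' ⟨0, by omega⟩ :=
          congrFun (congrArg Subtype.val hEq) ⟨0, by omega⟩
        rw [ext_lt u.1 β₁ (show ((⟨0, by omega⟩ : Fin (k+1)) : ℕ) < k by simp only [Fin.val_mk]; omega),
          ext_lt v.1 β' (show ((⟨0, by omega⟩ : Fin (k+1)) : ℕ) < k by simp only [Fin.val_mk]; omega)] at h0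
        exact absurd h0 (ne_of_lt hu0v0)
      · intro i hi
        show ext k u.1 β₁ ⟨i + 1, hi⟩ = ext k v.1 β' ⟨i, Nat.lt_of_succ_lt hi⟩
        by_cases hik : i + 1 < k
        · rw [ext_lt u.1 β₁ (show ((⟨i + 1, hi⟩ : Fin (k + 1)) : ℕ) < k by simp only [Fin.val_mk]; omega),
            ext_lt v.1 β' (show ((⟨i, by omega⟩ : Fin (k + 1)) : ℕ) < k by simp only [Fin.val_mk]; omega)]
          exact hsh i hik
        · have hik' : i + 1 = k := by omega
          rw [ext_last u.1 β₁ (show ¬ ((⟨i + 1, hi⟩ : Fin (k + 1)) : ℕ) < k by simp only [Fin.val_mk]; omega),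
            ext_lt v.1 β' (show ((⟨i, by omega⟩ : Fin (k + 1)) : ℕ) < k by simp only [Fin.val_mk]; omega)]
          rw [hβ₁]
          exact congrArg v.1 (Fin.ext (by simp only [Fin.val_mk]; omega))
    have hGproper : ∀ u v, (ShiftGraph A k).Adj u v → G u ≠ G v := by
      rintro u v ⟨hne, hsh | hsh⟩
      · by_cases hk2 : k = 1
        · subst hk2
          have hne0 : u.1 ⟨0, by omega⟩ ≠ v.1 ⟨0, by omega⟩ := by
            intro hEq
            apply hne
            apply Subtype.ext
            funext i
            have : i = ⟨0, by omega⟩ := Subsingleton.elim _ _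
            rw [this]
            exact hEq
          rcases lt_or_gt_of_ne hne0 with h | h
          · exact keyL u v (fun i hi => by omega) h
          · exact (keyL v u (fun i hi => by omega) h).symm
        · have hlast : u.1 ⟨k - 1, by omega⟩ < v.1 ⟨k - 1, by omega⟩ := by
            have h1 : u.1 ⟨k - 2 + 1, by omega⟩ = v.1 ⟨k - 2, by omega⟩ := hsh (k - 2) (by omega)
            have h2 : (⟨k - 2 + 1, by omega⟩ : Fin k) = ⟨k - 1, by omega⟩ := by
              rw [Fin.mk.injEq]; omega
            rw [h2] at h1
            rw [h1]
            exact v.2 (show (⟨k - 2, by omega⟩ : Fin k) < ⟨k - 1, by omega⟩ by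
              rw [Fin.mk_lt_mk]; omega)
          exact keyL u v hsh hlast
      · by_cases hk2 : k = 1
        · subst hk2
          have hne0 : u.1 ⟨0, by omega⟩ ≠ v.1 ⟨0, by omega⟩ := by
            intro hEq
            apply hne
            apply Subtype.ext
            funext i
            have : i = ⟨0, by omega⟩ := Subsingleton.elim _ _
            rw [this]
            exact hEq
          rcases lt_or_gt_of_ne hne0 with h | h
          · exact keyL u v (fun i hi => by omega) h
          · exact (keyL v u (fun i hi => by omega) h).symm
        · have hlast : v.1 ⟨k - 1, by omega⟩ < u.1 ⟨k - 1, by omega⟩ := by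
            have h1 : v.1 ⟨k - 2 + 1, by omega⟩ = u.1 ⟨k - 2, by omega⟩ := hsh (k - 2) (by omega)
            have h2 : (⟨k - 2 + 1, by omega⟩ : Fin k) = ⟨k - 1, by omega⟩ := by
              rw [Fin.mk.injEq]; omega
            rw [h2] at h1
            rw [h1]
            exact u.2 (show (⟨k - 2, by omega⟩ : Fin k) < ⟨k - 1, by omega⟩ by
              rw [Fin.mk_lt_mk]; omega)
          exact (keyL v u hsh hlast).symm
    have := ih (Set C) G hGproper
    calc #A ≤ iterBeth #(Set C) (k - 1) := this
      _ = iterBeth (2 ^ #C) (k - 1) := by rw [Cardinal.mk_set]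
      _ = iterBeth #C (k - 1 + 1) := iterBeth_base_pow _ _
      _ = iterBeth #C (k + 1 - 1) := by congr 1; omega

end Lower

section PartB

variable (k : ℕ) (W : Type) (H : SimpleGraph W)

/-- The constants-only language with one constant for each pair (vertex, index). -/
abbrev LB := constantsOn (W × Fin k)

/-- The pair `p` as a constant symbol. -/
def toC (p : W × Fin k) : (LB k W).Constants := p

/-- Constant terms. -/
def cterm (p : W × Fin k) : (LB k W).Term Empty :=
  Constants.term (toC k W p)

/-- For each vertex, its tuple of constants is injective. -/
def injSent (v : W) (i j : Fin k) : (LB k W).Sentence :=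
  ∼(Term.equal (cterm k W (v, i)) (cterm k W (v, j)))

/-- The tuple of `u` shifted is the tuple of `v`. -/
noncomputable def shiftF (u v : W) : (LB k W).Sentence :=
  BoundedFormula.iInf (fun j : {j // j ∈ Finset.range (k - 1)} =>
    (fun j : ℕ =>
      if h : j + 1 < k then
        Term.equal (cterm k W (u, ⟨j + 1, h⟩)) (cterm k W (v, ⟨j, Nat.lt_of_succ_lt h⟩))
      else ⊤) j.1)

/-- The tuples of `u` and `v` differ somewhere. -/
noncomputable def neF (u v : W) : (LB k W).Sentence :=
  BoundedFormula.iSup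
    (fun i : Fin k => ∼(Term.equal (cterm k W (u, i)) (cterm k W (v, i))))

noncomputable def edgeSent (u v : W) : (LB k W).Sentence :=
  (shiftF k W u v ⊔ shiftF k W v u) ⊓ neF k W u v

/-- The theory associated to a finite set of vertices. -/
noncomputable def TS (S : Finset W) : (LB k W).Theory :=
  {φ | ∃ v ∈ S, ∃ i j : Fin k, i ≠ j ∧ φ = injSent k W v i j} ∪
  {φ | ∃ u ∈ S, ∃ v ∈ S, H.Adj u v ∧ φ = edgeSent k W u v}

section Realize

variable {k W} {N : Type} [(LB k W).Structure N]

/-- The interpretation of the constant `p` in `N`. -/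
def gmap (p : W × Fin k) : N := (toC k W p : N)

lemma gmap_eq (p : W × Fin k) {v : Empty → N} :
    (cterm k W p).realize v = gmap p := by
  simp [cterm, gmap]

lemma realize_equal' {t₁ t₂ : (LB k W).Term Empty} {v : Empty → N} {xs : Fin 0 → N} :
    BoundedFormula.Realize (Term.equal t₁ t₂) v xs ↔ t₁.realize v = t₂.realize v := by
  have hxs : xs = default := Subsingleton.elim _ _
  subst hxs
  exact Formula.realize_equal

lemma realize_equal_gmap {p q : W × Fin k} {v : Empty → N} {xs : Fin 0 → N} :
    BoundedFormula.Realize (Term.equal (cterm k W p) (cterm k W q)) v xs ↔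
      (gmap p : N) = gmap q := by
  rw [realize_equal', gmap_eq, gmap_eq]

lemma realize_injSent {v : W} {i j : Fin k} :
    (N ⊨ injSent k W v i j) ↔
      ¬ (gmap (v, i) : N) = (gmap (v, j) : N) := by
  rw [injSent, Sentence.Realize, Formula.realize_not, Formula.realize_equal, gmap_eq, gmap_eq]

lemma realize_shiftF {u v : W} :
    (N ⊨ shiftF k W u v) ↔
      ∀ (j : ℕ) (h : j + 1 < k),
        (gmap (u, ⟨j + 1, h⟩) : N) = (gmap (v, ⟨j, Nat.lt_of_succ_lt h⟩) : N) := by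
  rw [shiftF, Sentence.Realize, Formula.Realize, BoundedFormula.realize_iInf]
  constructor
  · intro h j hj
    have := h ⟨j, Finset.mem_range.2 (by omega)⟩
    simp only [dif_pos hj] at this
    exact realize_equal_gmap.1 this
  · rintro h ⟨j, hmem⟩
    by_cases hj : j + 1 < k
    · simp only [dif_pos hj]
      exact realize_equal_gmap.2 (h j hj)
    · simp only [dif_neg hj]
      exact BoundedFormula.realize_top.2 trivial

lemma realize_neF {u v : W} :
    (N ⊨ neF k W u v) ↔
      ∃ i : Fin k, ¬ (gmap (u, i) : N) = (gmap (v, i) : N) := by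
  rw [neF, Sentence.Realize, Formula.Realize, BoundedFormula.realize_iSup]
  constructor
  · rintro ⟨i, h⟩
    rw [BoundedFormula.realize_not] at h
    exact ⟨i, fun hc => h (realize_equal_gmap.2 hc)⟩
  · rintro ⟨i, h⟩
    refine ⟨i, ?_⟩
    rw [BoundedFormula.realize_not]
    exact fun hc => h (realize_equal_gmap.1 hc)

lemma realize_edgeSent {u v : W} :
    (N ⊨ edgeSent k W u v) ↔
      ((N ⊨ shiftF k W u v) ∨ (N ⊨ shiftF k W v u)) ∧ (N ⊨ neF k W u v) := by
  rw [edgeSent, Sentence.Realize, Formula.Realize, BoundedFormula.realize_inf,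
    BoundedFormula.realize_sup]
  rfl

end Realize

end PartB

section PartBMain

variable {k : ℕ} {W : Type} {H : SimpleGraph W}

lemma relMap_adj' {V : Type} (G : SimpleGraph V) (a b : V) :
    @Structure.RelMap Language.graph V G.structure 2 Language.adj ![a, b] ↔ G.Adj a b :=
  Iff.rfl

/-- Every finite edge pattern of `H` can be realized in any elementarily equivalent graph. -/
lemma pattern_transfer
    (hEE : @Language.ElementarilyEquivalent Language.graph W {s : Fin k → ℕ // StrictMono s}
      H.structure (ShiftGraph ℕ k).structure)
    (S : Finset W) :
    ∃ m : {x // x ∈ S} → {s : Fin k → ℕ // StrictMono s},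
      ∀ u v : {x // x ∈ S}, H.Adj u.1 v.1 → (ShiftGraph ℕ k).Adj (m u) (m v) := by
  classical
  letI : Language.graph.Structure W := H.structure
  letI : Language.graph.Structure {s : Fin k → ℕ // StrictMono s} := (ShiftGraph ℕ k).structure
  set n := S.card with hn
  set e : {x // x ∈ S} ≃ Fin n := S.equivFin with he
  set P : Finset (Fin n × Fin n) :=
    Finset.univ.filter (fun p => H.Adj (e.symm p.1).1 (e.symm p.2).1) with hP
  set φpat : Language.graph.BoundedFormula Empty n :=
    BoundedFormula.iInf
      (fun p : P => Language.adj.boundedFormula₂ (Term.var (Sum.inr p.1.1)) (Term.var (Sum.inr p.1.2)))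
    with hφpat
  have hHreal : W ⊨ φpat.exs := by
    rw [Sentence.Realize, BoundedFormula.realize_exs]
    refine ⟨fun a => (e.symm a).1, ?_⟩
    rw [BoundedFormula.realize_iInf]
    rintro ⟨p, hp⟩
    rw [BoundedFormula.realize_rel₂]
    simp only [Term.realize_var, Sum.elim_inr]
    rw [hP, Finset.mem_filter] at hp
    exact hp.2
  have hSh : ({s : Fin k → ℕ // StrictMono s}) ⊨ φpat.exs := (hEE.realize_sentence _).1 hHreal
  rw [Sentence.Realize, BoundedFormula.realize_exs] at hSh
  obtain ⟨xs, hxs⟩ := hSh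
  rw [BoundedFormula.realize_iInf] at hxs
  refine ⟨fun x => xs (e x), ?_⟩
  intro u v huv
  have hmem : ((e u, e v) : Fin n × Fin n) ∈ P := by
    rw [hP, Finset.mem_filter]
    refine ⟨Finset.mem_univ _, ?_⟩
    simpa using huv
  have := hxs ⟨(e u, e v), hmem⟩
  rw [BoundedFormula.realize_rel₂] at this
  exact (relMap_adj' _ _ _).1 (by simpa only [Term.realize_var, Sum.elim_inr] using this)

lemma TS_satisfiable (hk : 1 ≤ k)
    (hEE : @Language.ElementarilyEquivalent Language.graph W {s : Fin k → ℕ // StrictMono s}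
      H.structure (ShiftGraph ℕ k).structure)
    (S : Finset W) : (TS k W H S).IsSatisfiable := by
  classical
  obtain ⟨m, hm⟩ := pattern_transfer hEE S
  set g₀ : W × Fin k → ℕ :=
    fun p => if h : p.1 ∈ S then (m ⟨p.1, h⟩).1 p.2 else 0 with hg₀
  letI : (LB k W).Structure ℕ := constantsOn.structure g₀
  have hgmap : ∀ p : W × Fin k, (gmap p : ℕ) = g₀ p := fun p => rfl
  have : ℕ ⊨ TS k W H S := by
    refine ⟨fun φ hφ => ?_⟩
    rcases hφ with h | h
    · obtain ⟨v, hv, i, j, hij, rfl⟩ := h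
      rw [realize_injSent, hgmap, hgmap, hg₀]
      simp only [dif_pos hv]
      intro hc
      exact hij ((m ⟨v, hv⟩).2.injective hc)
    · obtain ⟨u, hu, v, hv, huv, rfl⟩ := h
      have hadj := hm ⟨u, hu⟩ ⟨v, hv⟩ huv
      obtain ⟨hne, hsh⟩ := hadj
      rw [realize_edgeSent]
      constructor
      · rcases hsh with hsh | hsh
        · left
          rw [realize_shiftF]
          intro j hj
          rw [hgmap, hgmap, hg₀]
          simp only [dif_pos hu, dif_pos hv]
          exact hsh j hj
        · right
          rw [realize_shiftF]
          intro j hj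
          rw [hgmap, hgmap, hg₀]
          simp only [dif_pos hu, dif_pos hv]
          exact hsh j hj
      · rw [realize_neF]
        have hfne : (m ⟨u, hu⟩).1 ≠ (m ⟨v, hv⟩).1 := fun hc => hne (Subtype.ext hc)
        obtain ⟨i, hi⟩ := Function.ne_iff.1 hfne
        refine ⟨i, ?_⟩
        rw [hgmap, hgmap, hg₀]
        simp only [dif_pos hu, dif_pos hv]
        exact hi
  exact Theory.Model.isSatisfiable ℕ

/-- Part (b). -/
lemma partB (k : ℕ) (hk : 1 ≤ k) (lam : Cardinal.{0}) (hlam : ℵ₀ ≤ lam)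
    (W : Type) (H : SimpleGraph W)
    (hEE : @Language.ElementarilyEquivalent Language.graph W {s : Fin k → ℕ // StrictMono s}
      H.structure (ShiftGraph ℕ k).structure)
    (hW : #W ≤ iterBeth lam (k - 1)) :
    ∃ (C : Type) (c : W → C), #C ≤ lam ∧ ∀ x y : W, H.Adj x y → c x ≠ c y := by
  classical
  have hdir : Directed (· ⊆ ·) (TS k W H) := by
    intro S S'
    refine ⟨S ∪ S', ?_, ?_⟩ <;>
    · rintro φ (h | h)
      · left
        obtain ⟨v, hv, i, j, hij, rfl⟩ := h
        exact ⟨v, by simp [hv], i, j, hij, rfl⟩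
      · right
        obtain ⟨u, hu, v, hv, huv, rfl⟩ := h
        exact ⟨u, by simp [hu], v, by simp [hv], huv, rfl⟩
  have hsat : Theory.IsSatisfiable (⋃ S : Finset W, TS k W H S) := by
    rw [Theory.isSatisfiable_directed_union_iff hdir]
    exact fun S => TS_satisfiable hk hEE S
  obtain ⟨M⟩ := hsat
  set g : W × Fin k → M := fun p => (gmap p : M) with hg
  have hsent : ∀ (S : Finset W) (φ : (LB k W).Sentence), φ ∈ TS k W H S → M ⊨ φ := by
    intro S φ hφ
    exact Theory.realize_sentence_of_mem (T := ⋃ S : Finset W, TS k W H S)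
      (Set.mem_iUnion.2 ⟨S, hφ⟩)
  have hginj : ∀ (v : W) (i j : Fin k), i ≠ j → g (v, i) ≠ g (v, j) := by
    intro v i j hij
    have := hsent {v} (injSent k W v i j) (Or.inl ⟨v, Finset.mem_singleton_self v, i, j, hij, rfl⟩)
    rwa [realize_injSent] at this
  have hedge : ∀ u v : W, H.Adj u v →
      ((M ⊨ shiftF k W u v) ∨ (M ⊨ shiftF k W v u)) ∧ (M ⊨ neF k W u v) := by
    intro u v huv
    have := hsent {u, v} (edgeSent k W u v)
      (Or.inr ⟨u, by simp, v, by simp, huv, rfl⟩)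
    rwa [realize_edgeSent] at this
  -- the range of `g` is a small set
  set X := ↥(Set.range g) with hX
  have hXcard : #X ≤ iterBeth lam (k - 1) := by
    have h1 : #X ≤ #(W × Fin k) := Cardinal.mk_range_le
    have h2 : #(W × Fin k) = #W * #(Fin k) := by
      rw [Cardinal.mk_prod, Cardinal.lift_id, Cardinal.lift_id]
    have hν : ℵ₀ ≤ iterBeth lam (k - 1) := aleph0_le_iterBeth hlam _
    have h3 : #(Fin k) ≤ iterBeth lam (k - 1) :=
      le_trans (le_of_lt (Cardinal.lt_aleph0_of_finite _)) hν
    calc #X ≤ #W * #(Fin k) := by rw [← h2]; exact h1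
      _ ≤ iterBeth lam (k - 1) * iterBeth lam (k - 1) := mul_le_mul' hW h3
      _ = iterBeth lam (k - 1) := Cardinal.mul_eq_self hν
  -- the homomorphism into the symmetric shift graph
  set F : W → {s : Fin k → X // Function.Injective s} :=
    fun w => ⟨fun i => ⟨g (w, i), ⟨(w, i), rfl⟩⟩, by
      intro i j hijc
      by_contra hij
      exact hginj w i j hij (congrArg Subtype.val hijc)⟩ with hF
  have hFhom : ∀ u v : W, H.Adj u v → (SymShiftGraph X k).Adj (F u) (F v) := by
    intro u v huv
    obtain ⟨hdirs, hne⟩ := hedge u v huv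
    constructor
    · rw [realize_neF] at hne
      obtain ⟨i, hi⟩ := hne
      intro hc
      apply hi
      exact congrArg Subtype.val (congrFun (congrArg Subtype.val hc) i)
    · rcases hdirs with hsh | hsh
      · left
        intro j hj
        apply Subtype.ext
        rw [realize_shiftF] at hsh
        exact hsh j hj
      · right
        intro j hj
        apply Subtype.ext
        rw [realize_shiftF] at hsh
        exact hsh j hj
  obtain ⟨C, c', hCle, hprop⟩ := symColor lam hlam k hk X hXcard
  refine ⟨C, fun w => c' (F w), hCle, ?_⟩
  intro x y hxy
  exact hprop (F x) (F y) (hFhom x y hxy)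

end PartBMain

section PartA

variable (k : ℕ) (A : Type) [LinearOrder A]

/-- Vertices of the shift graph. -/
abbrev Vert := {s : Fin k → A // StrictMono s}

/-- The language of graphs with constants for all vertices of `ShiftGraph A k`. -/
abbrev LA := Language.graph[[Vert k A]]

/-- The adjacency relation symbol of `LA`. -/
abbrev adjA : (LA k A).Relations 2 := Sum.inl Language.adj

/-- The sentence asserting that constants `s` and `t` are adjacent. -/
def edgeA (s t : Vert k A) : (LA k A).Sentence :=
  (adjA k A).formula₂ ((Language.graph.con s).term) ((Language.graph.con t).term)

/-- The sentence asserting that constants `s` and `t` are distinct. -/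
def neA (s t : Vert k A) : (LA k A).Sentence :=
  ∼(Term.equal ((Language.graph.con s).term) ((Language.graph.con t).term))

section RealizeA

variable {k A} {N : Type} [(LA k A).Structure N]

/-- Interpretation of the constant associated to `s`. -/
def gA (s : Vert k A) : N := ((Language.graph.con s) : N)

lemma realize_edgeA {s t : Vert k A} :
    (N ⊨ edgeA k A s t) ↔ Structure.RelMap (adjA k A) ![(gA s : N), gA t] := by
  rw [edgeA, Sentence.Realize, Formula.realize_rel₂]
  simp [gA]

lemma realize_neA {s t : Vert k A} :
    (N ⊨ neA k A s t) ↔ ¬ (gA s : N) = gA t := by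
  rw [neA, Sentence.Realize, Formula.realize_not, Formula.realize_equal]
  simp [gA]

end RealizeA

/-- The theory for a finite set of vertices. -/
noncomputable def TA (V₀ : Type) [Language.graph.Structure V₀] (S : Finset (Vert k A)) :
    (LA k A).Theory :=
  (Language.graph.lhomWithConstants (Vert k A)).onTheory (Language.graph.completeTheory V₀) ∪
  {φ | ∃ s ∈ S, ∃ t ∈ S, (ShiftGraph A k).Adj s t ∧ φ = edgeA k A s t} ∪
  {φ | ∃ s ∈ S, ∃ t ∈ S, s ≠ t ∧ φ = neA k A s t}

end PartA

section PartASat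

variable {k : ℕ} {A : Type} [LinearOrder A]

/-- Finite patterns from `ShiftGraph A k` can be realized in `ShiftGraph ℕ k`:
build the theory model. -/
lemma TA_satisfiable (hk : 1 ≤ k) [Nonempty A] (S : Finset (Vert k A)) :
    letI : Language.graph.Structure {s : Fin k → ℕ // StrictMono s} := (ShiftGraph ℕ k).structure
    (TA k A {s : Fin k → ℕ // StrictMono s} S).IsSatisfiable := by
  classical
  letI : Language.graph.Structure {s : Fin k → ℕ // StrictMono s} := (ShiftGraph ℕ k).structure
  -- collect the elements of `A` used by `S`
  set A₀ : Finset A := S.biUnion (fun s => Finset.image s.1 Finset.univ) with hA₀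
  set θ : {a // a ∈ A₀} → ℕ := fun a => ((A₀.orderIsoOfFin rfl).symm a : Fin A₀.card) with hθ
  have θmono : ∀ a b : {x // x ∈ A₀}, a < b → θ a < θ b := by
    intro a b hab
    have := (A₀.orderIsoOfFin rfl).symm.strictMono hab
    exact this
  have θinj : Function.Injective θ := by
    intro a b hab
    have : (A₀.orderIsoOfFin rfl).symm a = (A₀.orderIsoOfFin rfl).symm b := Fin.val_injective hab
    exact (A₀.orderIsoOfFin rfl).symm.injective this
  have memA₀ : ∀ s : Vert k A, s ∈ S → ∀ i : Fin k, s.1 i ∈ A₀ := by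
    intro s hs i
    rw [hA₀]
    exact Finset.mem_biUnion.2 ⟨s, hs, Finset.mem_image.2 ⟨i, Finset.mem_univ i, rfl⟩⟩
  haveI hNe : Nonempty {s : Fin k → ℕ // StrictMono s} :=
    ⟨⟨fun i => (i : ℕ), fun i j hij => hij⟩⟩
  set v₀ : {s : Fin k → ℕ // StrictMono s} := Classical.arbitrary _ with hv₀
  set mA : Vert k A → {s : Fin k → ℕ // StrictMono s} :=
    fun s => if h : s ∈ S then
      ⟨fun i => θ ⟨s.1 i, memA₀ s h i⟩, by
        intro i j hij
        exact θmono _ _ (by exact s.2 hij)⟩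
    else v₀ with hmA
  letI : (constantsOn (Vert k A)).Structure {s : Fin k → ℕ // StrictMono s} :=
    constantsOn.structure mA
  have hmodel : ({s : Fin k → ℕ // StrictMono s}) ⊨
      TA k A {s : Fin k → ℕ // StrictMono s} S := by
    refine ⟨fun φ hφ => ?_⟩
    rcases hφ with (h | h) | h
    · -- complete theory part
      obtain ⟨ψ, hψ, rfl⟩ := h
      rw [LHom.realize_onSentence]
      exact (Language.graph.completeTheory _).realize_sentence_of_mem hψ
    · -- edge part
      obtain ⟨s, hs, t, ht, hadj, rfl⟩ := h
      rw [realize_edgeA]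
      have hGadj : (ShiftGraph ℕ k).Adj (mA s) (mA t) := by
        obtain ⟨hne, hsh⟩ := hadj
        constructor
        · rw [hmA]
          simp only [dif_pos hs, dif_pos ht]
          intro hc
          apply hne
          apply Subtype.ext
          funext i
          have hv := congrFun (congrArg Subtype.val hc) i
          exact congrArg Subtype.val (θinj hv)
        · rcases hsh with hsh | hsh
          · left
            intro i hi
            rw [hmA]
            simp only [dif_pos hs, dif_pos ht]
            apply congrArg θ
            apply Subtype.ext
            exact hsh i hi
          · right
            intro i hi
            rw [hmA]
            simp only [dif_pos hs, dif_pos ht]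
            apply congrArg θ
            apply Subtype.ext
            exact hsh i hi
      have : gA (N := {s : Fin k → ℕ // StrictMono s}) s = mA s := rfl
      rw [this]
      have : gA (N := {s : Fin k → ℕ // StrictMono s}) t = mA t := rfl
      rw [this]
      have hrel : Structure.RelMap (M := {s : Fin k → ℕ // StrictMono s})
          (adjA k A) ![mA s, mA t] ↔ (ShiftGraph ℕ k).Adj (mA s) (mA t) := by
        rw [show (adjA k A) = Sum.inl Language.adj from rfl]
        rw [withConstants_relMap_sumInl]
        exact Iff.rfl
      exact hrel.2 hGadj
    · -- distinctness part
      obtain ⟨s, hs, t, ht, hne, rfl⟩ := h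
      rw [realize_neA]
      have h1 : gA (N := {s : Fin k → ℕ // StrictMono s}) s = mA s := rfl
      have h2 : gA (N := {s : Fin k → ℕ // StrictMono s}) t = mA t := rfl
      rw [h1, h2, hmA]
      simp only [dif_pos hs, dif_pos ht]
      intro hc
      apply hne
      apply Subtype.ext
      funext i
      have hv := congrFun (congrArg Subtype.val hc) i
      exact congrArg Subtype.val (θinj hv)
  exact Theory.Model.isSatisfiable {s : Fin k → ℕ // StrictMono s}

end PartASat

section PartAMain

variable {k : ℕ}

/-- Part (a): a graph elementarily equivalent to `Sh_k(ℕ)` of cardinality `ℶ_{k-1}(λ)⁺`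
with no proper coloring using at most `λ` colors. -/
lemma partA (hk : 1 ≤ k) (lam : Cardinal.{0}) (hlam : ℵ₀ ≤ lam) :
    ∃ (W : Type) (H : SimpleGraph W),
      (@Language.ElementarilyEquivalent Language.graph W {s : Fin k → ℕ // StrictMono s}
        H.structure (ShiftGraph ℕ k).structure) ∧
      #W = Order.succ (iterBeth lam (k - 1)) ∧
      ¬ ∃ (C : Type) (c : W → C), #C ≤ lam ∧ ∀ x y : W, H.Adj x y → c x ≠ c y := by
  classical
  set κ := iterBeth lam (k - 1) with hκ
  have hκinf : ℵ₀ ≤ κ := aleph0_le_iterBeth hlam _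
  set B := (Order.succ κ).ord.ToType with hB
  have hBcard : #B = Order.succ κ := by rw [hB, Cardinal.mk_toType, Cardinal.card_ord]
  have hκsuccinf : ℵ₀ ≤ Order.succ κ := le_trans hκinf (Order.le_succ κ)
  haveI hBne : Nonempty B := by
    rw [← Cardinal.mk_ne_zero_iff, hBcard]
    exact ne_of_gt (lt_of_lt_of_le Cardinal.aleph0_pos hκsuccinf)
  set A := B ×ₗ ℕ with hA
  haveI : Nonempty A := by
    obtain ⟨b⟩ := hBne
    exact ⟨toLex (b, 0)⟩
  have hAcard : #A = Order.succ κ := by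
    have h1 : #A = #(B × ℕ) := rfl
    rw [h1, Cardinal.mk_prod, Cardinal.lift_id, Cardinal.lift_id, Cardinal.mk_nat, hBcard,
      Cardinal.mul_eq_max hκsuccinf le_rfl, max_eq_left hκsuccinf]
  -- the vertex set of `ShiftGraph A k` has cardinality `succ κ`
  set va : A → Vert k A := fun a =>
    ⟨fun i => toLex ((ofLex a).1, (ofLex a).2 + (i : ℕ)), by
      intro i j hij
      rw [Prod.Lex.lt_iff]
      right
      exact ⟨rfl, by simp only [ofLex_toLex]; omega⟩⟩ with hva
  have hvainj : Function.Injective va := by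
    intro a b hab
    have := congrFun (congrArg Subtype.val hab) ⟨0, by omega⟩
    simp only [hva] at this
    have h2 : toLex ((ofLex a).1, (ofLex a).2) = toLex ((ofLex b).1, (ofLex b).2) := by
      simpa using this
    calc a = toLex (ofLex a) := rfl
      _ = toLex (ofLex b) := by simpa using h2
      _ = b := rfl
  have hVcard : #(Vert k A) = Order.succ κ := by
    apply le_antisymm
    · calc #(Vert k A) ≤ #(Fin k → A) := Cardinal.mk_subtype_le _
        _ = #A ^ (k : Cardinal) := by
            rw [Cardinal.mk_arrow, Cardinal.lift_id, Cardinal.lift_id, Cardinal.mk_fin]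
        _ = (Order.succ κ) ^ (k : Cardinal) := by rw [hAcard]
        _ = Order.succ κ := by
            have := Cardinal.power_nat_eq hκsuccinf hk
            exact_mod_cast this
    · have h := Cardinal.mk_le_of_injective hvainj
      rwa [hAcard] at h
  -- set up the theory
  letI : Language.graph.Structure {s : Fin k → ℕ // StrictMono s} := (ShiftGraph ℕ k).structure
  have hdir : Directed (· ⊆ ·) (TA k A {s : Fin k → ℕ // StrictMono s}) := by
    intro S S'
    refine ⟨S ∪ S', ?_, ?_⟩ <;>
    · rintro φ ((h | h) | h)
      · exact Or.inl (Or.inl h)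
      · refine Or.inl (Or.inr ?_)
        obtain ⟨s, hs, t, ht, hadj, rfl⟩ := h
        exact ⟨s, by simp [hs], t, by simp [ht], hadj, rfl⟩
      · refine Or.inr ?_
        obtain ⟨s, hs, t, ht, hne, rfl⟩ := h
        exact ⟨s, by simp [hs], t, by simp [ht], hne, rfl⟩
  have hsat : Theory.IsSatisfiable (⋃ S : Finset (Vert k A),
      TA k A {s : Fin k → ℕ // StrictMono s} S) := by
    rw [Theory.isSatisfiable_directed_union_iff hdir]
    exact fun S => TA_satisfiable hk S
  obtain ⟨M₀⟩ := hsat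
  have hsent : ∀ (S : Finset (Vert k A)) (φ : (LA k A).Sentence),
      φ ∈ TA k A {s : Fin k → ℕ // StrictMono s} S → M₀ ⊨ φ := by
    intro S φ hφ
    exact Theory.realize_sentence_of_mem
      (T := ⋃ S : Finset (Vert k A), TA k A {s : Fin k → ℕ // StrictMono s} S)
      (Set.mem_iUnion.2 ⟨S, hφ⟩)
  -- constants are interpreted injectively, so `M₀` is large
  have hgAinj : Function.Injective (fun s : Vert k A => (gA s : M₀)) := by
    intro s t hst
    by_contra hne
    have := hsent {s, t} (neA k A s t) (Or.inr ⟨s, by simp, t, by simp, hne, rfl⟩)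
    rw [realize_neA] at this
    exact this hst
  have hM₀big : Order.succ κ ≤ #M₀ := by
    have h := Cardinal.mk_le_of_injective hgAinj
    rwa [hVcard] at h
  -- Löwenheim–Skolem down to exactly `succ κ`
  have hLcard : (LA k A).card ≤ Order.succ κ := by
    rw [Language.card_withConstants]
    have h1 : Language.graph.card ≤ ℵ₀ := by
      rw [Language.card]
      exact Cardinal.mk_le_aleph0
    simp only [Cardinal.lift_id]
    calc Language.graph.card + #(Vert k A)
        ≤ ℵ₀ + Order.succ κ := add_le_add h1 (le_of_eq hVcard)
      _ = max ℵ₀ (Order.succ κ) := Cardinal.add_eq_max le_rfl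
      _ = Order.succ κ := max_eq_right hκsuccinf
  obtain ⟨SE, -, hSEcard⟩ := exists_elementarySubstructure_card_eq (LA k A) (∅ : Set M₀)
    (Order.succ κ) hκsuccinf (by simp) (by simpa using hLcard) (by simpa using hM₀big)
  set W := (SE : Type) with hW
  have hWcard : #W = Order.succ κ := by simpa using hSEcard
  letI instW : Language.graph.Structure W :=
    (Language.graph.lhomWithConstants (Vert k A)).reduct W
  letI instM₀g : Language.graph.Structure M₀ :=
    (Language.graph.lhomWithConstants (Vert k A)).reduct M₀
  haveI hexpW : (Language.graph.lhomWithConstants (Vert k A)).IsExpansionOn W :=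
    LHom.isExpansionOn_reduct _ _
  haveI hexpM₀ : (Language.graph.lhomWithConstants (Vert k A)).IsExpansionOn M₀ :=
    LHom.isExpansionOn_reduct _ _
  have honmem : ∀ φ : Language.graph.Sentence,
      ({s : Fin k → ℕ // StrictMono s}) ⊨ φ →
      M₀ ⊨ (Language.graph.lhomWithConstants (Vert k A)).onSentence φ := by
    intro φ hφ
    refine hsent ∅ _ (Or.inl (Or.inl ?_))
    exact ⟨φ, mem_completeTheory.2 hφ, rfl⟩
  have hiff : ∀ φ : Language.graph.Sentence,
      W ⊨ φ ↔ ({s : Fin k → ℕ // StrictMono s}) ⊨ φ := by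
    intro φ
    have h1 : W ⊨ φ ↔
        (W ⊨ (Language.graph.lhomWithConstants (Vert k A)).onSentence φ) :=
      (LHom.realize_onSentence (M := W) (Language.graph.lhomWithConstants (Vert k A)) φ).symm
    have h2 : (W ⊨ (Language.graph.lhomWithConstants (Vert k A)).onSentence φ) ↔
        M₀ ⊨ (Language.graph.lhomWithConstants (Vert k A)).onSentence φ :=
      SE.realize_sentence _
    have h3 : (M₀ ⊨ (Language.graph.lhomWithConstants (Vert k A)).onSentence φ) ↔
        M₀ ⊨ φ := LHom.realize_onSentence (M := M₀) (Language.graph.lhomWithConstants (Vert k A)) φ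
    rw [h1, h2, h3]
    constructor
    · intro h
      by_contra hneg
      have hν : ({s : Fin k → ℕ // StrictMono s}) ⊨ ∼φ := by
        rw [Sentence.Realize, Formula.realize_not]
        exact hneg
      have := honmem _ hν
      rw [LHom.realize_onSentence, Sentence.Realize, Formula.realize_not] at this
      exact this h
    · intro h
      have := honmem _ h
      rwa [LHom.realize_onSentence] at this
  have hEEW : W ≅[Language.graph] ({s : Fin k → ℕ // StrictMono s}) :=
    elementarilyEquivalent_iff.2 hiff
  haveI hWsg : W ⊨ Theory.simpleGraph := hEEW.symm.theory_model
  set H := simpleGraphOfStructure W with hH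
  have hHs : H.structure = instW := structure_simpleGraphOfStructure
  -- the vertex map into `W`
  set f : Vert k A → W := fun s => ⟨(gA s : M₀), SE.toSubstructure.constants_mem _⟩ with hf
  have hfadj : ∀ s t : Vert k A, (ShiftGraph A k).Adj s t → H.Adj (f s) (f t) := by
    intro s t hst
    have hreal := hsent {s, t} (edgeA k A s t)
      (Or.inl (Or.inr ⟨s, by simp, t, by simp, hst, rfl⟩))
    rw [realize_edgeA] at hreal
    show Structure.RelMap (M := W) Language.adj ![f s, f t]
    show Structure.RelMap (M := M₀) (adjA k A) (fun i => ((![f s, f t] i : W) : M₀))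
    have hcoe : (fun i => ((![f s, f t] i : W) : M₀)) = ![(gA s : M₀), (gA t : M₀)] := by
      funext i
      fin_cases i <;> rfl
    rw [hcoe]
    exact hreal
  refine ⟨W, H, ?_, ?_, ?_⟩
  · rw [hHs]
    exact hEEW
  · rw [hWcard]
  · rintro ⟨C, c, hC, hprop⟩
    have hproper : ∀ x y, (ShiftGraph A k).Adj x y → c (f x) ≠ c (f y) :=
      fun x y h => hprop _ _ (hfadj x y h)
    have hlow := shiftLower k hk C (fun s => c (f s)) hproper
    have h2 : #A ≤ κ := le_trans hlow (iterBeth_mono hC _)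
    rw [hAcard] at h2
    exact absurd h2 (not_le.2 (Order.lt_succ κ))

end PartAMain

end Stmt17

theorem stmt_17 (k : ℕ) (hk : 1 ≤ k) (lam : Cardinal) (hlam : ℵ₀ ≤ lam) :
    -- (a) a model of `Th(Sh_k(ℕ))` of cardinality `ℶ_{k-1}(lam)⁺` with chromatic number `> lam`
    (∃ (W : Type) (H : SimpleGraph W),
      (@ElementarilyEquivalent Language.graph W {s : Fin k → ℕ // StrictMono s}
        H.structure (ShiftGraph ℕ k).structure) ∧
      #W = Order.succ (iterBeth lam (k - 1)) ∧
      ¬ ∃ (C : Type) (c : W → C), #C ≤ lam ∧ ∀ x y : W, H.Adj x y → c x ≠ c y) ∧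
    -- (b) every model of `Th(Sh_k(ℕ))` of cardinality `≤ ℶ_{k-1}(lam)` has chromatic number `≤ lam`
    (∀ (W : Type) (H : SimpleGraph W),
      (@ElementarilyEquivalent Language.graph W {s : Fin k → ℕ // StrictMono s}
        H.structure (ShiftGraph ℕ k).structure) →
      #W ≤ iterBeth lam (k - 1) →
      ∃ (C : Type) (c : W → C), #C ≤ lam ∧ ∀ x y : W, H.Adj x y → c x ≠ c y) := by
  constructor
  · exact Stmt17.partA hk lam hlam
  · intro W H hEE hW
    exact Stmt17.partB k hk lam hlam W H hEE hW
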